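/- Assume the constrained dual LP is feasible, and let (v*, q*, w*) be an optimal solution of the constrained primal LP. Then v* and q* satisfy the Bellman optimality equations for the modified reward r*_CRL(s,a,s') = r(s,a,s') + Σ_{k=1}^K w_k* r_k(s,a,s'): v*(s) = max_a Σ_{s'} τ(s'|s,a)(r*_CRL(s,a,s') + γ v*(s')) for all s and q*(s,a) = Σ_{s'} τ(s'|s,a)(r*_CRL(s,a,s') + γ v*(s')) for all s,a; hence v* and q* are the optimal value functions of the MDP with reward r*_CRL. -/

import Mathlib

open Finset

section MDPDefs

variable {S A : Type*}

/-- A (stationary, stochastic) policy on finite state/action spaces. -/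
def IsPolicy [Fintype A] (π : S → A → ℝ) : Prop :=
  (∀ s a, 0 ≤ π s a) ∧ ∀ s, ∑ a, π s a = 1

/-- `d` is the (discounted) state visitation density of the policy `π`:
it satisfies `d(s) = (1-γ)ι(s) + γ Σ_{s',a'} d(s') π(a'|s') τ(s|s',a')`. -/
def IsVisit [Fintype S] [Fintype A] (ι : S → ℝ) (τ : S → A → S → ℝ) (γ : ℝ)
    (π : S → A → ℝ) (d : S → ℝ) : Prop :=
  ∀ s, d s = (1 - γ) * ι s + γ * ∑ s', ∑ a', d s' * π s' a' * τ s' a' s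

/-- Feasibility for the value-learning dual LP. -/
def DualFeas [Fintype S] [Fintype A] (ι : S → ℝ) (τ : S → A → S → ℝ) (γ : ℝ)
    (d : S → ℝ) (p : S → A → ℝ) : Prop :=
  (∀ s, ∑ a, p s a = d s) ∧
  (∀ s, d s = (1 - γ) * ι s + γ * ∑ s', ∑ a', p s' a' * τ s' a' s) ∧
  ∀ s a, 0 ≤ p s a

/-- The dual objective: the average reward under the state-action density `p`,
`Σ_{s,a} p(s,a) Σ_{s'} τ(s'|s,a) r(s,a,s')`. -/
def DualObj [Fintype S] [Fintype A] (τ : S → A → S → ℝ) (r : S → A → S → ℝ)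
    (p : S → A → ℝ) : ℝ :=
  ∑ s, ∑ a, p s a * ∑ s', τ s a s' * r s a s'

/-- The standing MDP assumptions: `ι` is an everywhere-positive initial-state
distribution, `τ(·|s,a)` are transition probabilities and `γ ∈ [0,1)`. -/
def IsMDP [Fintype S] [Fintype A] (ι : S → ℝ) (τ : S → A → S → ℝ) (γ : ℝ) : Prop :=
  (∀ s, 0 < ι s) ∧ (∑ s, ι s = 1) ∧
  (∀ s a s', 0 ≤ τ s a s') ∧ (∀ s a, ∑ s', τ s a s' = 1) ∧
  0 ≤ γ ∧ γ < 1

end MDPDefs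

private lemma ciSup_le_ciSup_add_aux {A : Type*} [Fintype A] [Nonempty A]
    (f g : A → ℝ) (c : ℝ) (h : ∀ a, f a ≤ g a + c) : (⨆ a, f a) ≤ (⨆ a, g a) + c := by
  refine ciSup_le fun a => (h a).trans (add_le_add ?_ (le_refl c))
  exact le_ciSup (Set.Finite.bddAbove (Set.finite_range g)) a

theorem crl_primal_bellman_optimality
    {S A : Type*} [Fintype S] [Fintype A] [Nonempty S] [Nonempty A]
    (ι : S → ℝ) (τ : S → A → S → ℝ) (γ : ℝ) (r : S → A → S → ℝ)
    (hMDP : IsMDP ι τ γ)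
    {K : ℕ} (rk : Fin K → S → A → S → ℝ) (V : Fin K → ℝ)
    (hDualFeas : ∃ (d : S → ℝ) (p : S → A → ℝ), DualFeas ι τ γ d p ∧
      ∀ k, (1 - γ) * V k ≤ DualObj τ (rk k) p)
    (vStar : S → ℝ) (qStar : S → A → ℝ) (wStar : Fin K → ℝ)
    (hFeas : (∀ s a, qStar s a ≤ vStar s) ∧
      (∀ s a, qStar s a = ∑ s', τ s a s' *
        (r s a s' + (∑ k, wStar k * rk k s a s') + γ * vStar s')) ∧
      ∀ k, 0 ≤ wStar k)
    (hOpt : ∀ (v : S → ℝ) (q : S → A → ℝ) (w : Fin K → ℝ),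
      ((∀ s a, q s a ≤ v s) ∧
        (∀ s a, q s a = ∑ s', τ s a s' *
          (r s a s' + (∑ k, w k * rk k s a s') + γ * v s')) ∧
        ∀ k, 0 ≤ w k) →
      (∑ s, ι s * ((1 - γ) * vStar s)) - ∑ k, wStar k * ((1 - γ) * V k) ≤
        (∑ s, ι s * ((1 - γ) * v s)) - ∑ k, w k * ((1 - γ) * V k)) :
    (∀ s, vStar s = ⨆ a, ∑ s', τ s a s' *
      ((r s a s' + ∑ k, wStar k * rk k s a s') + γ * vStar s')) ∧
    (∀ s a, qStar s a = ∑ s', τ s a s' *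
      ((r s a s' + ∑ k, wStar k * rk k s a s') + γ * vStar s')) ∧
    (∀ v : S → ℝ,
      (∀ s, v s = ⨆ a, ∑ s', τ s a s' *
        ((r s a s' + ∑ k, wStar k * rk k s a s') + γ * v s')) → v = vStar) := by
  classical
  obtain ⟨hle, hq, hw⟩ := hFeas
  obtain ⟨hι, hιsum, hτ0, hτ1, hγ0, hγ1⟩ := hMDP
  -- abbreviation for modified reward
  set R : S → A → S → ℝ := fun s a s' => r s a s' + ∑ k, wStar k * rk k s a s' with hR
  have hqR : ∀ s a, qStar s a = ∑ s', τ s a s' * (R s a s' + γ * vStar s') := hq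
  -- Step 1 : vStar s = ⨆ a, qStar s a
  have hsup_le : ∀ s, (⨆ a, qStar s a) ≤ vStar s := fun s => ciSup_le (hle s)
  have key : ∀ s, vStar s = ⨆ a, qStar s a := by
    intro s0
    by_contra hne
    have hlt : (⨆ a, qStar s0 a) < vStar s0 := lt_of_le_of_ne (hsup_le s0) (Ne.symm hne)
    set ε : ℝ := vStar s0 - ⨆ a, qStar s0 a with hε
    have hε0 : 0 < ε := by simpa [hε] using hlt
    set v' : S → ℝ := fun s => vStar s - if s = s0 then ε else 0 with hv'
    set q' : S → A → ℝ := fun s a => ∑ s', τ s a s' * (R s a s' + γ * v' s') with hq'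
    have hq'eq : ∀ s a, q' s a = qStar s a - γ * ε * τ s a s0 := by
      intro s a
      have : q' s a = (∑ s', τ s a s' * (R s a s' + γ * vStar s'))
          - γ * ∑ s', τ s a s' * (if s' = s0 then ε else 0) := by
        simp only [hq', hv']
        rw [Finset.mul_sum, ← Finset.sum_sub_distrib]
        exact Finset.sum_congr rfl fun s' _ => by ring
      rw [this, ← hqR]
      have : ∑ s', τ s a s' * (if s' = s0 then ε else 0) = τ s a s0 * ε := by
        simp [mul_ite, mul_zero]
      rw [this]; ring
    have hfeas' : (∀ s a, q' s a ≤ v' s) ∧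
        (∀ s a, q' s a = ∑ s', τ s a s' *
          (r s a s' + (∑ k, wStar k * rk k s a s') + γ * v' s')) ∧
        ∀ k, 0 ≤ wStar k := by
      refine ⟨fun s a => ?_, fun s a => ?_, hw⟩
      · rw [hq'eq]
        by_cases hs : s = s0
        · subst hs
          have h1 : qStar s a ≤ vStar s - ε := by
            have := le_ciSup (Set.Finite.bddAbove (Set.finite_range (qStar s))) a
            simp only [hε]; linarith
          have h2 : 0 ≤ γ * ε * τ s a s := 
            mul_nonneg (mul_nonneg hγ0 hε0.le) (hτ0 s a s)
          have h3 : v' s = vStar s - ε := by simp [hv']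
          rw [h3]; linarith
        · simp only [hv', if_neg hs, sub_zero]
          have := hle s a
          have h2 : 0 ≤ γ * ε * τ s a s0 :=
            mul_nonneg (mul_nonneg hγ0 hε0.le) (hτ0 s a s0)
          linarith
      · simp only [hq']; rfl
    have hobj := hOpt v' q' wStar hfeas'
    have hvsum : ∑ s, ι s * ((1 - γ) * v' s)
        = (∑ s, ι s * ((1 - γ) * vStar s)) - ι s0 * ((1 - γ) * ε) := by
      rw [show ι s0 * ((1 - γ) * ε)
          = ∑ s, ι s * ((1 - γ) * (if s = s0 then ε else 0)) by
        simp [mul_ite, mul_zero]]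
      rw [← Finset.sum_sub_distrib]
      refine Finset.sum_congr rfl fun s _ => ?_
      simp only [hv']
      ring
    rw [hvsum] at hobj
    have hpos : 0 < ι s0 * ((1 - γ) * ε) :=
      mul_pos (hι s0) (mul_pos (by linarith) hε0)
    linarith
  have bell : ∀ s, vStar s = ⨆ a, ∑ s', τ s a s' * (R s a s' + γ * vStar s') := by
    intro s
    rw [key s]
    exact iSup_congr (fun a => hqR s a)
  refine ⟨bell, hqR, ?_⟩
  -- uniqueness via contraction
  intro v hv
  have hbound : ∀ (c : ℝ), (∀ s, |v s - vStar s| ≤ c) → ∀ s, |v s - vStar s| ≤ γ * c := by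
    intro c hc s
    have h1 : ∀ a, |(∑ s', τ s a s' * (R s a s' + γ * v s'))
        - ∑ s', τ s a s' * (R s a s' + γ * vStar s')| ≤ γ * c := by
      intro a
      rw [← Finset.sum_sub_distrib]
      calc |∑ s', (τ s a s' * (R s a s' + γ * v s') - τ s a s' * (R s a s' + γ * vStar s'))|
          ≤ ∑ s', |τ s a s' * (R s a s' + γ * v s') - τ s a s' * (R s a s' + γ * vStar s')| :=
            Finset.abs_sum_le_sum_abs _ _
        _ = ∑ s', τ s a s' * γ * |v s' - vStar s'| := by
            refine Finset.sum_congr rfl fun s' _ => ?_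
            rw [show τ s a s' * (R s a s' + γ * v s') - τ s a s' * (R s a s' + γ * vStar s')
              = (τ s a s' * γ) * (v s' - vStar s') by ring]
            rw [abs_mul, abs_of_nonneg (mul_nonneg (hτ0 s a s') hγ0)]
        _ ≤ ∑ s', τ s a s' * γ * c := by
            refine Finset.sum_le_sum fun s' _ => ?_
            exact mul_le_mul_of_nonneg_left (hc s') (mul_nonneg (hτ0 s a s') hγ0)
        _ = γ * c := by
            rw [show ∑ s', τ s a s' * γ * c = (∑ s', τ s a s') * (γ * c) by
              rw [Finset.sum_mul]; exact Finset.sum_congr rfl fun s' _ => by ring]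
            rw [hτ1 s a, one_mul]
    rw [hv s, bell s, abs_sub_le_iff]
    constructor
    · have := ciSup_le_ciSup_add_aux (fun a => ∑ s', τ s a s' * (R s a s' + γ * v s'))
        (fun a => ∑ s', τ s a s' * (R s a s' + γ * vStar s')) (γ * c)
        (fun a => by have := (abs_sub_le_iff.mp (h1 a)).1; linarith)
      linarith
    · have := ciSup_le_ciSup_add_aux (fun a => ∑ s', τ s a s' * (R s a s' + γ * vStar s'))
        (fun a => ∑ s', τ s a s' * (R s a s' + γ * v s')) (γ * c)
        (fun a => by have := (abs_sub_le_iff.mp (h1 a)).2; linarith)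
      linarith
  obtain ⟨s0, hs0⟩ := Finite.exists_max (fun s => |v s - vStar s|)
  set M := |v s0 - vStar s0| with hM
  have hM0 : 0 ≤ M := abs_nonneg _
  have hMle : M ≤ γ * M := hbound M (fun s => hs0 s) s0
  have hMzero : M = 0 := by nlinarith
  funext s
  have : |v s - vStar s| ≤ M := hs0 s
  rw [hMzero] at this
  have := abs_nonneg (v s - vStar s)
  have h0 : |v s - vStar s| = 0 := le_antisymm ‹|v s - vStar s| ≤ 0› this
  have := abs_eq_zero.mp h0
  linarith
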